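/- Let (θ_k)_{k≥0} be a sequence of positive reals with θ₀ = 1 satisfying θ_{k+1} − θ_k ≤ −σ θ_k^ν θ_{k+1} / √(Q θ_k + R²) for all k ∈ ℕ, where σ, Q > 0, R ≥ 0 and ν ≥ 1/2, and suppose θ_{k+1}/θ_k ≥ τ > 0 for all k. Then there exists a constant C_ν > 0 depending only on ν such that for all k ≥ 1: if ν > 1/2 then θ_k ≤ C_ν [ (√Q/(σ τ k))^{2/(2ν−1)} + (R/(σ τ k))^{1/ν} ], and if ν = 1/2 then θ_k ≤ C_ν [ exp(−σ τ k/(2√Q)) + (R/(σ τ k))² ]. -/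

import Mathlib

set_option maxHeartbeats 1000000

open Real

namespace DiffIneqAux

lemma bern_neg {α t : ℝ} (hα : 0 ≤ α) (ht : 0 < t) (ht1 : t ≤ 1) :
    1 + α * (1 - t) ≤ t ^ (-α) := by
  rcases le_or_gt 1 α with h1 | h1
  · have hu : (0:ℝ) ≤ 1/t - 1 := by
      rw [sub_nonneg, le_div_iff₀ ht]; linarith
    have hb := one_add_mul_self_le_rpow_one_add (s := 1/t - 1) (by linarith) h1
    have he : (1 + (1/t - 1)) = t⁻¹ := by field_simp; ring
    rw [he] at hb
    have h2 : t⁻¹ ^ α = t ^ (-α) := by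
      rw [Real.inv_rpow ht.le, ← Real.rpow_neg ht.le]
    have h3 : 1 - t ≤ 1/t - 1 := by
      rw [div_sub' (ne_of_gt ht), le_div_iff₀ ht]; nlinarith
    calc 1 + α * (1 - t) ≤ 1 + α * (1/t - 1) := by nlinarith
    _ ≤ t⁻¹ ^ α := hb
    _ = t ^ (-α) := h2
  · have hb := rpow_one_add_le_one_add_mul_self (s := t - 1) (by linarith) hα h1.le
    have he : (1 + (t - 1)) = t := by ring
    rw [he] at hb
    have ha : α * (1 - t) < 1 := by nlinarith
    have hpos : (0:ℝ) < t ^ α := Real.rpow_pos_of_pos ht α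
    rw [Real.rpow_neg ht.le, inv_eq_one_div, le_div_iff₀ hpos]
    nlinarith [mul_le_mul_of_nonneg_left hb (show (0:ℝ) ≤ 1 + α*(1-t) by nlinarith),
      sq_nonneg (α*(1-t))]

lemma tangent {α x y : ℝ} (hα : 0 ≤ α) (hy : 0 < y) (hxy : y ≤ x) :
    α * (x - y) * x ^ (-α - 1) ≤ y ^ (-α) - x ^ (-α) := by
  have hx : 0 < x := lt_of_lt_of_le hy hxy
  have ht : 0 < y / x := div_pos hy hx
  have ht1 : y / x ≤ 1 := (div_le_one hx).mpr hxy
  have key := bern_neg hα ht ht1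
  have hxa : (0:ℝ) < x ^ (-α) := Real.rpow_pos_of_pos hx _
  have hmul := mul_le_mul_of_nonneg_right key hxa.le
  have e1 : (y / x) ^ (-α) * x ^ (-α) = y ^ (-α) := by
    rw [← Real.mul_rpow (le_of_lt ht) hx.le]
    congr 1
    field_simp
  have e2 : x ^ (-α - 1) = x ^ (-α) / x := by
    rw [Real.rpow_sub hx, Real.rpow_one]
  rw [e1] at hmul
  rw [e2]
  have : (1 + α * (1 - y / x)) * x ^ (-α)
      = x ^ (-α) + α * (x - y) * (x ^ (-α) / x) := by
    field_simp
  rw [this] at hmul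
  linarith

lemma uinc {c ν x y : ℝ} (hy : 0 < y) (hxy : y ≤ x) (hc : 0 ≤ c) {α : ℝ} (hα : 0 ≤ α)
    (hαν : ν = α + 1/2) (hstep : c * (x ^ ν * Real.sqrt x) ≤ x - y) :
    α * c ≤ y ^ (-α) - x ^ (-α) := by
  have hx : 0 < x := lt_of_lt_of_le hy hxy
  have ht := tangent hα hy hxy
  have h1 : α * (c * (x ^ ν * Real.sqrt x)) * x ^ (-α-1) ≤ α * (x - y) * x ^ (-α-1) :=
    mul_le_mul_of_nonneg_right (mul_le_mul_of_nonneg_left hstep hα) (by positivity)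
  refine le_trans (le_of_eq ?_) (le_trans h1 ht)
  have key : x ^ ν * Real.sqrt x * x ^ (-α - 1) = 1 := by
    rw [Real.sqrt_eq_rpow, ← Real.rpow_add hx, ← Real.rpow_add hx,
      show ν + 1/2 + (-α - 1) = 0 by rw [hαν]; ring, Real.rpow_zero]
  linear_combination (-(α * c)) * key

lemma vinc {c ν x y : ℝ} (hy : 0 < y) (hxy : y ≤ x) (hc : 0 ≤ c) (hν : 0 ≤ ν)
    (hstep : c * (x ^ ν * x) ≤ x - y) :
    ν * c ≤ y ^ (-ν) - x ^ (-ν) := by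
  have hx : 0 < x := lt_of_lt_of_le hy hxy
  have ht := tangent hν hy hxy
  have h1 : ν * (c * (x ^ ν * x)) * x ^ (-ν-1) ≤ ν * (x - y) * x ^ (-ν-1) :=
    mul_le_mul_of_nonneg_right (mul_le_mul_of_nonneg_left hstep hν) (by positivity)
  refine le_trans (le_of_eq ?_) (le_trans h1 ht)
  have key : x ^ ν * x * x ^ (-ν - 1) = 1 := by
    rw [show x ^ ν * x = x ^ ν * x ^ (1:ℝ) by rw [Real.rpow_one], ← Real.rpow_add hx,
      ← Real.rpow_add hx, show ν + 1 + (-ν - 1) = 0 by ring, Real.rpow_zero]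
  linear_combination (-(ν * c)) * key

lemma logstep {c x y : ℝ} (hy : 0 < y) (hx : 0 < x) (hstep : c * x ≤ x - y) :
    c ≤ Real.log x - Real.log y := by
  have h1c : 0 < 1 - c := by nlinarith
  have hyx : y ≤ x * (1 - c) := by nlinarith
  have := Real.log_le_log hy hyx
  rw [Real.log_mul (ne_of_gt hx) (ne_of_gt h1c)] at this
  have := Real.log_le_sub_one_of_pos h1c
  linarith

lemma incr_nonneg {β x y : ℝ} (hy : 0 < y) (hxy : y ≤ x) (hβ : 0 ≤ β) :
    0 ≤ y ^ (-β) - x ^ (-β) := by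
  have := Real.rpow_le_rpow_of_nonpos hy hxy (neg_nonpos.mpr hβ)
  linarith

lemma sum_ge (F : ℕ → ℝ) (h0 : F 0 = 0) (hstep : ∀ j, F j + 1 ≤ F (j + 1)) :
    ∀ k : ℕ, (k : ℝ) ≤ F k := by
  intro k
  induction k with
  | zero => simp [h0]
  | succ n ih => push_cast; linarith [hstep n]

section
variable {ν σ Q R τ : ℝ} {θ : ℕ → ℝ}

lemma hdec_lemma (hσ : 0 < σ) (hQ : 0 < Q) (hR : 0 ≤ R) (hτ : 0 < τ)
    (hθpos : ∀ k, 0 < θ k)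
    (hrec : ∀ k, θ (k + 1) - θ k ≤
      -(σ * θ k ^ ν * θ (k + 1)) / Real.sqrt (Q * θ k + R ^ 2))
    (hratio : ∀ k, θ (k + 1) / θ k ≥ τ) (j : ℕ) :
    σ * τ * (θ j ^ ν * θ j) / Real.sqrt (Q * θ j + R ^ 2) ≤ θ j - θ (j + 1) := by
  have hθj := hθpos j
  have hs : 0 < Real.sqrt (Q * θ j + R ^ 2) := Real.sqrt_pos.mpr (by positivity)
  have hτθ : τ * θ j ≤ θ (j + 1) := by
    have := hratio j
    rw [ge_iff_le, le_div_iff₀ (hθpos j)] at this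
    linarith
  have h1 := hrec j
  have h2 : σ * θ j ^ ν * θ (j + 1) / Real.sqrt (Q * θ j + R ^ 2) ≤ θ j - θ (j+1) := by
    have : θ (j+1) - θ j ≤ -(σ * θ j ^ ν * θ (j+1) / Real.sqrt (Q * θ j + R ^ 2)) := by
      rw [← neg_div]; exact h1
    linarith
  refine le_trans ?_ h2
  have hrp : (0:ℝ) < θ j ^ ν := Real.rpow_pos_of_pos hθj ν
  apply div_le_div_of_nonneg_right ?_ hs.le |>.trans_eq rfl
  nlinarith [mul_le_mul_of_nonneg_left hτθ (by positivity : (0:ℝ) ≤ σ * θ j ^ ν)]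

lemma hmono_lemma (hσ : 0 < σ) (hQ : 0 < Q) (hR : 0 ≤ R) (hτ : 0 < τ)
    (hθpos : ∀ k, 0 < θ k)
    (hrec : ∀ k, θ (k + 1) - θ k ≤
      -(σ * θ k ^ ν * θ (k + 1)) / Real.sqrt (Q * θ k + R ^ 2))
    (hratio : ∀ k, θ (k + 1) / θ k ≥ τ) (j : ℕ) :
    θ (j + 1) ≤ θ j := by
  have h := hdec_lemma hσ hQ hR hτ hθpos hrec hratio j
  have hθj := hθpos j
  have : 0 ≤ σ * τ * (θ j ^ ν * θ j) / Real.sqrt (Q * θ j + R ^ 2) := by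
    have hrp : (0:ℝ) < θ j ^ ν := Real.rpow_pos_of_pos hθj ν
    positivity
  linarith

lemma stepA (hσ : 0 < σ) (hQ : 0 < Q) (hR : 0 ≤ R) (hτ : 0 < τ)
    (hθpos : ∀ k, 0 < θ k)
    (hrec : ∀ k, θ (k + 1) - θ k ≤
      -(σ * θ k ^ ν * θ (k + 1)) / Real.sqrt (Q * θ k + R ^ 2))
    (hratio : ∀ k, θ (k + 1) / θ k ≥ τ) (j : ℕ) (hA : R ^ 2 ≤ Q * θ j) :
    σ * τ / (Real.sqrt 2 * Real.sqrt Q) * (θ j ^ ν * Real.sqrt (θ j)) ≤ θ j - θ (j + 1) := by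
  have hθj := hθpos j
  have hrp : (0:ℝ) < θ j ^ ν := Real.rpow_pos_of_pos hθj ν
  refine le_trans ?_ (hdec_lemma hσ hQ hR hτ hθpos hrec hratio j)
  have hsle : Real.sqrt (Q * θ j + R ^ 2) ≤ Real.sqrt 2 * Real.sqrt Q * Real.sqrt (θ j) := by
    rw [← Real.sqrt_mul (by norm_num) Q, ← Real.sqrt_mul (by positivity) (θ j)]
    exact Real.sqrt_le_sqrt (by nlinarith)
  have hden : (0:ℝ) < Real.sqrt 2 * Real.sqrt Q * Real.sqrt (θ j) := by positivity
  have key : σ * τ * (θ j ^ ν * θ j) / (Real.sqrt 2 * Real.sqrt Q * Real.sqrt (θ j))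
      ≤ σ * τ * (θ j ^ ν * θ j) / Real.sqrt (Q * θ j + R ^ 2) := by
    gcongr
  refine le_trans (le_of_eq ?_) key
  have hss : Real.sqrt (θ j) * Real.sqrt (θ j) = θ j := Real.mul_self_sqrt hθj.le
  rw [div_mul_eq_mul_div, div_eq_div_iff (by positivity) (ne_of_gt hden)]
  linear_combination (σ * τ * θ j ^ ν * (Real.sqrt 2 * Real.sqrt Q)) * hss

lemma stepB (hσ : 0 < σ) (hQ : 0 < Q) (hR : 0 ≤ R) (hτ : 0 < τ)
    (hθpos : ∀ k, 0 < θ k)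
    (hrec : ∀ k, θ (k + 1) - θ k ≤
      -(σ * θ k ^ ν * θ (k + 1)) / Real.sqrt (Q * θ k + R ^ 2))
    (hratio : ∀ k, θ (k + 1) / θ k ≥ τ) (j : ℕ) (hB : Q * θ j < R ^ 2) :
    σ * τ / (2 * R) * (θ j ^ ν * θ j) ≤ θ j - θ (j + 1) := by
  have hθj := hθpos j
  have hRpos : 0 < R := by nlinarith [hθpos j]
  have hrp : (0:ℝ) < θ j ^ ν := Real.rpow_pos_of_pos hθj ν
  refine le_trans ?_ (hdec_lemma hσ hQ hR hτ hθpos hrec hratio j)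
  have hsle : Real.sqrt (Q * θ j + R ^ 2) ≤ 2 * R := by
    have : Q * θ j + R ^ 2 ≤ (2 * R) ^ 2 := by nlinarith
    calc Real.sqrt (Q * θ j + R ^ 2) ≤ Real.sqrt ((2*R)^2) := Real.sqrt_le_sqrt this
    _ = 2 * R := Real.sqrt_sq (by positivity)
  have key : σ * τ * (θ j ^ ν * θ j) / (2 * R)
      ≤ σ * τ * (θ j ^ ν * θ j) / Real.sqrt (Q * θ j + R ^ 2) := by
    gcongr
  refine le_trans (le_of_eq (by ring)) key

end

end DiffIneqAux
open DiffIneqAux in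
/-- Lemma C.2: sharp decay estimate for positive sequences satisfying
`θₖ₊₁ − θₖ ≤ −σ θₖ^ν θₖ₊₁ / √(Q θₖ + R²)` with bounded ratio `θₖ₊₁/θₖ ≥ τ`,
where the constant `C_ν` depends only on `ν ≥ 1/2`. -/
theorem difference_inequality_decay_sqrt :
    ∀ ν : ℝ, (1 : ℝ) / 2 ≤ ν →
    ∃ C : ℝ, 0 < C ∧
      ∀ (σ Q R τ : ℝ) (θ : ℕ → ℝ),
        0 < σ → 0 < Q → 0 ≤ R → 0 < τ →
        (∀ k, 0 < θ k) → θ 0 = 1 →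
        (∀ k, θ (k + 1) - θ k ≤
          -(σ * θ k ^ ν * θ (k + 1)) / Real.sqrt (Q * θ k + R ^ 2)) →
        (∀ k, θ (k + 1) / θ k ≥ τ) →
        ∀ k : ℕ, 1 ≤ k →
          ((1 : ℝ) / 2 < ν →
            θ k ≤ C * ((Real.sqrt Q / (σ * τ * (k : ℝ))) ^ ((2 : ℝ) / (2 * ν - 1))
              + (R / (σ * τ * (k : ℝ))) ^ ((1 : ℝ) / ν))) ∧
          (ν = 1 / 2 →
            θ k ≤ C * (Real.exp (-(σ * τ * (k : ℝ)) / (2 * Real.sqrt Q))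
              + (R / (σ * τ * (k : ℝ))) ^ (2 : ℕ))) := by
  intro ν hν
  have h2s : 0 < Real.sqrt 2 := Real.sqrt_pos.mpr (by norm_num)
  have h22 : Real.sqrt 2 * Real.sqrt 2 = 2 := Real.mul_self_sqrt (by norm_num)
  rcases eq_or_lt_of_le hν with heq | hlt
  · -- ν = 1/2 branch
    subst heq
    have h2lt : Real.sqrt 2 < 2 := by nlinarith
    have hd : 0 < 1 - Real.sqrt 2 / 2 := by nlinarith
    refine ⟨(4 / (1 - Real.sqrt 2 / 2)) ^ 2 + 1, by positivity, ?_⟩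
    intro σ Q R τ θ hσ hQ hR hτ hθpos hθ0 hrec hratio k hk
    refine ⟨fun h => absurd h (by norm_num), fun _ => ?_⟩
    have hmono := hmono_lemma hσ hQ hR hτ hθpos hrec hratio
    have hQs : 0 < Real.sqrt Q := Real.sqrt_pos.mpr hQ
    have hkpos : (0:ℝ) < (k:ℝ) := by exact_mod_cast Nat.pos_of_ne_zero (by omega)
    have hst : 0 < σ * τ := mul_pos hσ hτ
    have hsum : (k:ℝ) ≤ Real.sqrt 2 * Real.sqrt Q / (σ * τ) * (-Real.log (θ k))
        + 4 * R / (σ * τ) * (θ k ^ (-(1/2):ℝ) - 1) := by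
      apply sum_ge (fun j => Real.sqrt 2 * Real.sqrt Q / (σ * τ) * (-Real.log (θ j))
        + 4 * R / (σ * τ) * (θ j ^ (-(1/2):ℝ) - 1))
      · simp [hθ0]
      · intro j
        have hθj := hθpos j; have hθj1 := hθpos (j+1); have hmj := hmono j
        show Real.sqrt 2 * Real.sqrt Q / (σ * τ) * (-Real.log (θ j))
            + 4 * R / (σ * τ) * (θ j ^ (-(1/2):ℝ) - 1) + 1 ≤
          Real.sqrt 2 * Real.sqrt Q / (σ * τ) * (-Real.log (θ (j+1)))
            + 4 * R / (σ * τ) * (θ (j+1) ^ (-(1/2):ℝ) - 1)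
        by_cases hAB : R ^ 2 ≤ Q * θ j
        · have hA := stepA hσ hQ hR hτ hθpos hrec hratio j hAB
          have hx2 : θ j ^ ((1:ℝ)/2) * Real.sqrt (θ j) = θ j := by
            rw [Real.sqrt_eq_rpow, ← Real.rpow_add hθj]; norm_num
          rw [hx2] at hA
          have hlog := logstep hθj1 hθj hA
          have hvn : (0:ℝ) ≤ θ (j+1) ^ (-(1/2):ℝ) - θ j ^ (-(1/2):ℝ) :=
            incr_nonneg hθj1 hmj (by norm_num)
          have hw1 : Real.sqrt 2 * Real.sqrt Q / (σ * τ)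
              * (σ * τ / (Real.sqrt 2 * Real.sqrt Q)) = 1 := by
            field_simp
          have hwn : (0:ℝ) ≤ Real.sqrt 2 * Real.sqrt Q / (σ * τ) := by positivity
          have hw2n : (0:ℝ) ≤ 4 * R / (σ * τ) := by positivity
          nlinarith [mul_le_mul_of_nonneg_left hlog hwn, mul_nonneg hw2n hvn]
        · push_neg at hAB
          have hRpos : 0 < R := by nlinarith [mul_pos hQ hθj]
          have hB := stepB hσ hQ hR hτ hθpos hrec hratio j hAB
          have hv := vinc hθj1 hmj (by positivity) (by norm_num) hB
          have hln : Real.log (θ (j+1)) ≤ Real.log (θ j) := Real.log_le_log hθj1 hmj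
          have hw2 : 4 * R / (σ * τ) * (1/2 * (σ * τ / (2 * R))) = 1 := by
            field_simp; ring
          have hwn : (0:ℝ) ≤ Real.sqrt 2 * Real.sqrt Q / (σ * τ) := by positivity
          have hw2n : (0:ℝ) ≤ 4 * R / (σ * τ) := by positivity
          nlinarith [mul_le_mul_of_nonneg_left hv hw2n,
            mul_nonneg hwn (by linarith : (0:ℝ) ≤ Real.log (θ j) - Real.log (θ (j+1)))]
    by_cases hcase : (k:ℝ)/Real.sqrt 2 ≤ Real.sqrt 2 * Real.sqrt Q / (σ * τ) * (-Real.log (θ k))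
    · have e1 : (k:ℝ)/Real.sqrt 2 * (Real.sqrt 2 * (σ*τ)) = σ*τ*(k:ℝ) := by
        field_simp
      have e2 : Real.sqrt 2 * Real.sqrt Q / (σ*τ) * (-Real.log (θ k)) * (Real.sqrt 2 * (σ*τ))
          = 2 * Real.sqrt Q * (-Real.log (θ k)) := by
        field_simp
        linear_combination (-Real.log (θ k)) * h22
      have hL : σ * τ * (k:ℝ) / (2 * Real.sqrt Q) ≤ -Real.log (θ k) := by
        rw [div_le_iff₀ (by positivity)]
        have := mul_le_mul_of_nonneg_right hcase (by positivity : (0:ℝ) ≤ Real.sqrt 2 * (σ*τ))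
        rw [e1, e2] at this
        nlinarith
      have hlog2 : Real.log (θ k) ≤ -(σ*τ*(k:ℝ))/(2*Real.sqrt Q) := by
        rw [neg_div]; linarith
      have hexp : θ k ≤ Real.exp (-(σ*τ*(k:ℝ))/(2*Real.sqrt Q)) := by
        calc θ k = Real.exp (Real.log (θ k)) := (Real.exp_log (hθpos k)).symm
        _ ≤ _ := Real.exp_le_exp.mpr hlog2
      have hT : (0:ℝ) ≤ (R/(σ*τ*(k:ℝ)))^2 := sq_nonneg _
      have hC : (1:ℝ) ≤ (4/(1-Real.sqrt 2/2))^2 + 1 := by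
        nlinarith [sq_nonneg (4/(1-Real.sqrt 2/2))]
      nlinarith [Real.exp_pos (-(σ*τ*(k:ℝ))/(2*Real.sqrt Q))]
    · push_neg at hcase
      have e3 : (k:ℝ)/Real.sqrt 2 = (k:ℝ)*Real.sqrt 2/2 := by
        rw [div_eq_div_iff h2s.ne' (by norm_num : (2:ℝ) ≠ 0)]
        nlinarith [h22]
      have hV : (k:ℝ) * (1 - Real.sqrt 2/2) ≤ 4*R/(σ*τ) * (θ k ^ (-(1/2):ℝ) - 1) := by
        linarith [hsum, hcase, e3]
      have hRpos : 0 < R := by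
        rcases hR.lt_or_eq with h|h
        · exact h
        · exfalso; rw [← h] at hV; simp at hV; nlinarith
      set m := (k:ℝ)*(1-Real.sqrt 2/2)*(σ*τ)/(4*R) with hm
      have hmpos : 0 < m := div_pos (mul_pos (mul_pos hkpos hd) hst) (by positivity)
      have em : m*(4*R) = ((k:ℝ)*(1-Real.sqrt 2/2))*(σ*τ) := by
        rw [hm]; field_simp
      have e4 : 4*R/(σ*τ)*(θ k ^ (-(1/2):ℝ) - 1)*(σ*τ) = 4*R*(θ k ^ (-(1/2):ℝ) - 1) := by
        field_simp
      have hvm : m ≤ θ k ^ (-(1/2):ℝ) := by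
        nlinarith [mul_le_mul_of_nonneg_right hV hst.le, e4, em, hRpos]
      have h2exp : (θ k ^ (-(1/2):ℝ)) * (θ k ^ (-(1/2):ℝ)) = (θ k)⁻¹ := by
        rw [← Real.rpow_add (hθpos k), show (-(1/2):ℝ)+(-(1/2)) = -1 by norm_num,
          Real.rpow_neg_one]
      have hsq : m^2 ≤ (θ k)⁻¹ := by
        have h1 : m*m ≤ (θ k ^ (-(1/2):ℝ)) * (θ k ^ (-(1/2):ℝ)) :=
          mul_le_mul hvm hvm hmpos.le (Real.rpow_nonneg (hθpos k).le _)
        calc m^2 = m*m := sq m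
        _ ≤ _ := h1
        _ = _ := h2exp
      have hθle : θ k ≤ (1/m)^2 := by
        rw [div_pow, one_pow, le_div_iff₀ (by positivity)]
        have h5 : m^2 * θ k ≤ (θ k)⁻¹ * θ k := mul_le_mul_of_nonneg_right hsq (hθpos k).le
        rw [inv_mul_cancel₀ (ne_of_gt (hθpos k))] at h5
        linarith
      have heq : (1/m)^2 = (4/(1-Real.sqrt 2/2))^2 * (R/(σ*τ*(k:ℝ)))^2 := by
        rw [hm]; field_simp
      nlinarith [Real.exp_pos (-(σ*τ*(k:ℝ))/(2*Real.sqrt Q)), sq_nonneg (R/(σ*τ*(k:ℝ))),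
        hθle, heq]
  · -- ν > 1/2 branch
    have hν0 : 0 < ν := by linarith
    obtain ⟨α, hαdef⟩ : ∃ α : ℝ, α = ν - 1/2 := ⟨_, rfl⟩
    have hα : 0 < α := by rw [hαdef]; linarith
    have hC1 : 0 < (2*Real.sqrt 2/α) ^ ((1:ℝ)/α) :=
      Real.rpow_pos_of_pos (div_pos (by positivity) hα) _
    have hC2 : 0 < (4/ν) ^ ((1:ℝ)/ν) := Real.rpow_pos_of_pos (by positivity) _
    refine ⟨(2*Real.sqrt 2/α) ^ ((1:ℝ)/α) + (4/ν) ^ ((1:ℝ)/ν), by linarith, ?_⟩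
    intro σ Q R τ θ hσ hQ hR hτ hθpos hθ0 hrec hratio k hk
    refine ⟨fun _ => ?_, fun h => by rw [h] at hlt; norm_num at hlt⟩
    have hmono := hmono_lemma hσ hQ hR hτ hθpos hrec hratio
    have hQs : 0 < Real.sqrt Q := Real.sqrt_pos.mpr hQ
    have hkpos : (0:ℝ) < (k:ℝ) := by exact_mod_cast Nat.pos_of_ne_zero (by omega)
    have hst : 0 < σ * τ := mul_pos hσ hτ
    have hαst : 0 < α * (σ*τ) := mul_pos hα hst
    have hνst : 0 < ν * (σ*τ) := mul_pos hν0 hst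
    have hsum : (k:ℝ) ≤ Real.sqrt 2 * Real.sqrt Q / (α*(σ*τ)) * (θ k ^ (-α) - 1)
        + 2 * R / (ν*(σ*τ)) * (θ k ^ (-ν) - 1) := by
      apply sum_ge (fun j => Real.sqrt 2 * Real.sqrt Q / (α*(σ*τ)) * (θ j ^ (-α) - 1)
        + 2 * R / (ν*(σ*τ)) * (θ j ^ (-ν) - 1))
      · simp [hθ0]
      · intro j
        have hθj := hθpos j; have hθj1 := hθpos (j+1); have hmj := hmono j
        show Real.sqrt 2 * Real.sqrt Q / (α*(σ*τ)) * (θ j ^ (-α) - 1)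
            + 2 * R / (ν*(σ*τ)) * (θ j ^ (-ν) - 1) + 1 ≤
          Real.sqrt 2 * Real.sqrt Q / (α*(σ*τ)) * (θ (j+1) ^ (-α) - 1)
            + 2 * R / (ν*(σ*τ)) * (θ (j+1) ^ (-ν) - 1)
        have hwn : (0:ℝ) ≤ Real.sqrt 2 * Real.sqrt Q / (α*(σ*τ)) :=
          (div_pos (mul_pos h2s hQs) hαst).le
        have hw2n : (0:ℝ) ≤ 2 * R / (ν*(σ*τ)) := div_nonneg (by positivity) hνst.le
        by_cases hAB : R ^ 2 ≤ Q * θ j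
        · have hA := stepA hσ hQ hR hτ hθpos hrec hratio j hAB
          have hu := uinc hθj1 hmj (le_of_lt (div_pos hst (mul_pos h2s hQs))) hα.le
            (by rw [hαdef]; ring) hA
          have hvn := incr_nonneg hθj1 hmj hν0.le
          have hw1 : Real.sqrt 2 * Real.sqrt Q / (α*(σ*τ))
              * (α * (σ * τ / (Real.sqrt 2 * Real.sqrt Q))) = 1 := by
            field_simp
          nlinarith [mul_le_mul_of_nonneg_left hu hwn, mul_nonneg hw2n hvn]
        · push_neg at hAB
          have hRpos : 0 < R := by nlinarith [mul_pos hQ hθj]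
          have hB := stepB hσ hQ hR hτ hθpos hrec hratio j hAB
          have hv := vinc hθj1 hmj (le_of_lt (div_pos hst (by positivity))) hν0.le hB
          have hun := incr_nonneg hθj1 hmj hα.le
          have hw2 : 2 * R / (ν*(σ*τ)) * (ν * (σ * τ / (2 * R))) = 1 := by
            field_simp
          nlinarith [mul_le_mul_of_nonneg_left hv hw2n, mul_nonneg hwn hun]
    by_cases hcase : (k:ℝ)/2 ≤ Real.sqrt 2 * Real.sqrt Q / (α*(σ*τ)) * (θ k ^ (-α) - 1)
    · -- sqrt-Q term dominates
      obtain ⟨m, hm⟩ : ∃ m : ℝ, m = α*(σ*τ)*(k:ℝ)/(2*(Real.sqrt 2*Real.sqrt Q)) := ⟨_, rfl⟩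
      have hmpos : 0 < m := by
        rw [hm]; exact div_pos (mul_pos hαst hkpos) (by positivity)
      have em : m * (2*(Real.sqrt 2*Real.sqrt Q)) = α*(σ*τ)*(k:ℝ) := by
        rw [hm]; field_simp
      have e4 : Real.sqrt 2 * Real.sqrt Q / (α*(σ*τ)) * (θ k ^ (-α) - 1) * (α*(σ*τ))
          = Real.sqrt 2 * Real.sqrt Q * (θ k ^ (-α) - 1) := by
        field_simp
      have h6 : (k:ℝ)/2*(α*(σ*τ)) ≤ Real.sqrt 2 * Real.sqrt Q * (θ k ^ (-α) - 1) := by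
        rw [← e4]; exact mul_le_mul_of_nonneg_right hcase hαst.le
      have hum : m ≤ θ k ^ (-α) := by
        have h8 : m ≤ θ k ^ (-α) - 1 := by
          rw [hm, div_le_iff₀ (by positivity)]
          linarith [h6]
        linarith
      have hle := Real.rpow_le_rpow_of_nonpos hmpos hum
        (neg_nonpos.mpr (le_of_lt (div_pos one_pos hα)) : -((1:ℝ)/α) ≤ 0)
      have hexpinv : (θ k ^ (-α)) ^ (-((1:ℝ)/α)) = θ k := by
        rw [← Real.rpow_mul (hθpos k).le, show (-α)*(-((1:ℝ)/α)) = 1 by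
          field_simp, Real.rpow_one]
      have hminv : m⁻¹ = (2*Real.sqrt 2/α) * (Real.sqrt Q/(σ*τ*(k:ℝ))) := by
        have hmm : ((2*Real.sqrt 2/α) * (Real.sqrt Q/(σ*τ*(k:ℝ)))) * m = 1 := by
          rw [hm]; field_simp
        exact (eq_inv_of_mul_eq_one_left hmm).symm
      have hmandec : m ^ (-((1:ℝ)/α))
          = (2*Real.sqrt 2/α)^((1:ℝ)/α) * (Real.sqrt Q/(σ*τ*(k:ℝ)))^((1:ℝ)/α) := by
        rw [Real.rpow_neg hmpos.le, ← Real.inv_rpow hmpos.le, hminv,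
          Real.mul_rpow (div_nonneg (by positivity) hα.le) (by positivity)]
      have hθk : θ k ≤ (2*Real.sqrt 2/α)^((1:ℝ)/α) * (Real.sqrt Q/(σ*τ*(k:ℝ)))^((1:ℝ)/α) := by
        rw [← hmandec, ← hexpinv]; exact hle
      have hee : (2:ℝ)/(2*ν-1) = (1:ℝ)/α := by
        rw [hαdef, div_eq_div_iff (by linarith) (by linarith)]; ring
      rw [hee]
      have hT2 : 0 ≤ (R/(σ*τ*(k:ℝ))) ^ ((1:ℝ)/ν) := Real.rpow_nonneg (by positivity) _
      have hT1 : 0 ≤ (Real.sqrt Q/(σ*τ*(k:ℝ))) ^ ((1:ℝ)/α) := Real.rpow_nonneg (by positivity) _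
      linarith [hθk, mul_nonneg hC1.le hT2, mul_nonneg hC2.le hT1, mul_nonneg hC2.le hT2]
    · push_neg at hcase
      have hV : (k:ℝ)/2 ≤ 2 * R / (ν*(σ*τ)) * (θ k ^ (-ν) - 1) := by linarith
      have hRpos : 0 < R := by
        rcases hR.lt_or_eq with h|h
        · exact h
        · exfalso; rw [← h] at hV; simp at hV; nlinarith
      obtain ⟨m, hm⟩ : ∃ m : ℝ, m = ν*(σ*τ)*(k:ℝ)/(4*R) := ⟨_, rfl⟩
      have hmpos : 0 < m := by
        rw [hm]; exact div_pos (mul_pos hνst hkpos) (by positivity)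
      have em : m * (4*R) = ν*(σ*τ)*(k:ℝ) := by
        rw [hm]; field_simp
      have e4 : 2 * R / (ν*(σ*τ)) * (θ k ^ (-ν) - 1) * (ν*(σ*τ))
          = 2 * R * (θ k ^ (-ν) - 1) := by
        field_simp
      have h6 : (k:ℝ)/2*(ν*(σ*τ)) ≤ 2 * R * (θ k ^ (-ν) - 1) := by
        rw [← e4]; exact mul_le_mul_of_nonneg_right hV hνst.le
      have hvm : m ≤ θ k ^ (-ν) := by
        have h8 : m ≤ θ k ^ (-ν) - 1 := by
          rw [hm, div_le_iff₀ (by positivity)]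
          linarith [h6]
        linarith
      have hle := Real.rpow_le_rpow_of_nonpos hmpos hvm
        (neg_nonpos.mpr (le_of_lt (div_pos one_pos hν0)) : -((1:ℝ)/ν) ≤ 0)
      have hexpinv : (θ k ^ (-ν)) ^ (-((1:ℝ)/ν)) = θ k := by
        rw [← Real.rpow_mul (hθpos k).le, show (-ν)*(-((1:ℝ)/ν)) = 1 by
          field_simp, Real.rpow_one]
      have hminv : m⁻¹ = (4/ν) * (R/(σ*τ*(k:ℝ))) := by
        have hmm : ((4/ν) * (R/(σ*τ*(k:ℝ)))) * m = 1 := by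
          rw [hm]; field_simp
        exact (eq_inv_of_mul_eq_one_left hmm).symm
      have hmandec : m ^ (-((1:ℝ)/ν))
          = (4/ν)^((1:ℝ)/ν) * (R/(σ*τ*(k:ℝ)))^((1:ℝ)/ν) := by
        rw [Real.rpow_neg hmpos.le, ← Real.inv_rpow hmpos.le, hminv,
          Real.mul_rpow (by positivity) (by positivity)]
      have hθk : θ k ≤ (4/ν)^((1:ℝ)/ν) * (R/(σ*τ*(k:ℝ)))^((1:ℝ)/ν) := by
        rw [← hmandec, ← hexpinv]; exact hle
      have hT2 : 0 ≤ (R/(σ*τ*(k:ℝ))) ^ ((1:ℝ)/ν) := Real.rpow_nonneg (by positivity) _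
      have hT1 : 0 ≤ (Real.sqrt Q/(σ*τ*(k:ℝ))) ^ ((2:ℝ)/(2*ν-1)) :=
        Real.rpow_nonneg (by positivity) _
      linarith [hθk, mul_nonneg hC1.le hT2, mul_nonneg hC2.le hT1, mul_nonneg hC1.le hT1]
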